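/- Let Λ = ℤ_p[[T]], p odd, u = 1+p, and for integers k ≥ a let I_k = (1 + T − u^k) ⊂ Λ. Then the natural map Λ → lim←_m Λ / ∏_{a ≤ k ≤ m} I_k is an isomorphism of topological rings. -/

import Mathlib

open PowerSeries

variable (p : ℕ) [Fact p.Prime]

/-- The product `∏_{a ≤ k ≤ m} (1 + T − u^k)` in `Λ = ℤ_p[[T]]`, `u = 1 + p`;
it generates the product ideal `∏_{a ≤ k ≤ m} I_k` with `I_k = (1 + T − u^k)`. -/
noncomputable def wprod (a m : ℕ) : PowerSeries ℤ_[p] :=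
  ∏ k ∈ Finset.Icc a m, (1 + X - C ((1 + p : ℤ_[p]) ^ k))

lemma wprod_dvd (a m : ℕ) : wprod p a m ∣ wprod p a (m + 1) :=
  Finset.prod_dvd_prod_of_subset _ _ _ (Finset.Icc_subset_Icc_right (Nat.le_succ m))

/-- The transition map `Λ/∏_{k ≤ m+1} I_k → Λ/∏_{k ≤ m} I_k`. -/
noncomputable def wmap (a m : ℕ) :
    PowerSeries ℤ_[p] ⧸ Ideal.span {wprod p a (m + 1)} →+*
      PowerSeries ℤ_[p] ⧸ Ideal.span {wprod p a m} :=
  Ideal.quotientMap _ (RingHom.id _)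
    (by
      rw [Ideal.span_le]
      intro y hy
      simp only [Set.mem_singleton_iff] at hy
      subst hy
      simpa [Ideal.mem_comap, Ideal.mem_span_singleton] using wprod_dvd p a m)

/-- The inverse limit `lim←_m Λ/∏_{a ≤ k ≤ m} I_k`, as a subring of the product. -/
noncomputable def iwasawaInverseLimit (a : ℕ) :
    Subring (Π m : ℕ, PowerSeries ℤ_[p] ⧸ Ideal.span {wprod p a m}) where
  carrier := {f | ∀ m, wmap p a m (f (m + 1)) = f m}
  mul_mem' hx hy := fun m => by
    simp only [Pi.mul_apply, map_mul]
    rw [hx m, hy m]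
  one_mem' := fun m => by simp
  add_mem' hx hy := fun m => by
    simp only [Pi.add_apply, (wmap p a m).map_add]
    rw [hx m, hy m]
  zero_mem' := fun m => by simp
  neg_mem' hx := fun m => by
    simp only [Pi.neg_apply, (wmap p a m).map_neg]
    rw [hx m]

/-- The `(p,T)`-adic topology on `Λ = ℤ_p[[T]]`, which coincides with the topology
of coefficientwise convergence. -/
noncomputable def lambdaTopology : TopologicalSpace (PowerSeries ℤ_[p]) :=
  TopologicalSpace.induced (fun F => fun n : ℕ => PowerSeries.coeff (R := ℤ_[p]) n F) inferInstance

/-! ### Auxiliary material -/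

namespace IwaAux

/-- The coefficient equivalence `ℤ_p[[T]] ≃ (ℕ → ℤ_p)`. -/
noncomputable def toPi : PowerSeries ℤ_[p] ≃ (ℕ → ℤ_[p]) where
  toFun F n := PowerSeries.coeff (R := ℤ_[p]) n F
  invFun f := PowerSeries.mk f
  left_inv F := by ext n; simp
  right_inv f := by funext n; simp

/-- With the `(p,T)`-adic topology, the coefficient equivalence is a homeomorphism. -/
noncomputable def lamHomeo :
    letI := lambdaTopology p
    PowerSeries ℤ_[p] ≃ₜ (ℕ → ℤ_[p]) :=
  letI := lambdaTopology p
  (toPi p).toHomeomorphOfIsInducing ⟨rfl⟩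

lemma lamCompact : @CompactSpace (PowerSeries ℤ_[p]) (lambdaTopology p) :=
  letI := lambdaTopology p
  (lamHomeo p).symm.compactSpace

lemma lamT2 : @T2Space (PowerSeries ℤ_[p]) (lambdaTopology p) :=
  letI := lambdaTopology p
  (lamHomeo p).isEmbedding.t2Space

lemma coeff_cont (n : ℕ) :
    @Continuous _ _ (lambdaTopology p) _ (fun F => PowerSeries.coeff (R := ℤ_[p]) n F) := by
  letI := lambdaTopology p
  have h : @Continuous _ _ (lambdaTopology p) _
      (fun F => fun n : ℕ => PowerSeries.coeff (R := ℤ_[p]) n F) := continuous_induced_dom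
  exact (continuous_apply n).comp h

lemma lamRing : @IsTopologicalRing (PowerSeries ℤ_[p]) (lambdaTopology p) _ := by
  letI := lambdaTopology p
  haveI : ContinuousAdd (PowerSeries ℤ_[p]) := ⟨continuous_induced_rng.2 <| continuous_pi fun n => by
      convert (((coeff_cont p n).comp continuous_fst).add
        ((coeff_cont p n).comp continuous_snd)) using 1; funext x; simp⟩
  haveI : ContinuousMul (PowerSeries ℤ_[p]) := ⟨continuous_induced_rng.2 <| continuous_pi fun n => by
      simp only [Function.comp_def, PowerSeries.coeff_mul]
      exact continuous_finset_sum _ fun q _ =>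
        ((coeff_cont p q.1).comp continuous_fst).mul ((coeff_cont p q.2).comp continuous_snd)⟩
  haveI : ContinuousNeg (PowerSeries ℤ_[p]) := ⟨continuous_induced_rng.2 <| continuous_pi fun n => by
      convert (coeff_cont p n).neg using 1; funext x; simp⟩
  exact { toIsTopologicalSemiring := { }, toContinuousNeg := ‹_› }

/-- Reduction `ℤ_p[[T]] → 𝔽_p[[T]]` mod `p`. -/
noncomputable def pr : PowerSeries ℤ_[p] →+* PowerSeries (ZMod p) :=
  PowerSeries.map (PadicInt.toZMod)

lemma pr_factor (k : ℕ) : pr p (1 + X - C ((1 + p : ℤ_[p]) ^ k)) = X := by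
  have h : (PadicInt.toZMod ((1 + p : ℤ_[p]) ^ k) : ZMod p) = 1 := by
    rw [map_pow, map_add, map_one, map_natCast, CharP.cast_eq_zero, add_zero, one_pow]
  rw [pr, map_sub, map_add, map_one, PowerSeries.map_X, PowerSeries.map_C, h, map_one]
  ring

lemma pr_wprod (a m : ℕ) : pr p (wprod p a m) = X ^ (Finset.Icc a m).card := by
  rw [wprod, map_prod]
  rw [Finset.prod_congr rfl fun k _ => pr_factor p k, Finset.prod_const]

lemma dvd_p_coeff {x : ℤ_[p]} (h : PadicInt.toZMod x = 0) : (p : ℤ_[p]) ∣ x := by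
  have : x ∈ RingHom.ker (PadicInt.toZMod : ℤ_[p] →+* ZMod p) := h
  rw [PadicInt.ker_toZMod, PadicInt.maximalIdeal_eq_span_p, Ideal.mem_span_singleton] at this
  exact this

lemma eq_p_mul_of_pr_zero {F : PowerSeries ℤ_[p]} (h : pr p F = 0) :
    ∃ G, F = C (p : ℤ_[p]) * G := by
  have hd : ∀ n, (p : ℤ_[p]) ∣ PowerSeries.coeff (R := ℤ_[p]) n F := by
    intro n
    apply dvd_p_coeff
    have := congrArg (PowerSeries.coeff (R := ZMod p) n) h
    simpa [pr] using this
  refine ⟨PowerSeries.mk fun n => (hd n).choose, ?_⟩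
  ext n
  simp only [PowerSeries.coeff_C_mul, PowerSeries.coeff_mk]
  exact (hd n).choose_spec

lemma pr_p_mul (G : PowerSeries ℤ_[p]) : pr p (C (p : ℤ_[p]) * G) = 0 := by
  rw [map_mul]
  have h0 : PadicInt.toZMod ((p:ℕ) : ℤ_[p]) = 0 := by
    rw [map_natCast, ZMod.natCast_self]
  have : pr p (C (p : ℤ_[p])) = 0 := by
    rw [pr, PowerSeries.map_C, h0, map_zero]
  rw [this, zero_mul]

lemma Cp_ne_zero : (C (p : ℤ_[p])) ≠ 0 := by
  intro h
  have := congrArg (PowerSeries.coeff (R := ℤ_[p]) 0) h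
  simp only [PowerSeries.coeff_zero_C, map_zero] at this
  exact (Nat.cast_ne_zero.mpr (Fact.out : p.Prime).ne_zero : (p:ℤ_[p]) ≠ 0) this

lemma wprod_dvd_of_dvd_p_mul {a m : ℕ} {G : PowerSeries ℤ_[p]}
    (h : wprod p a m ∣ C (p : ℤ_[p]) * G) : wprod p a m ∣ G := by
  obtain ⟨H, hH⟩ := h
  have h2 : pr p (wprod p a m) * pr p H = 0 := by
    rw [← map_mul, ← hH, pr_p_mul]
  rw [pr_wprod] at h2
  have hX : (X : PowerSeries (ZMod p)) ^ (Finset.Icc a m).card ≠ 0 :=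
    pow_ne_zero _ PowerSeries.X_ne_zero
  have hHz : pr p H = 0 := by
    rcases mul_eq_zero.mp h2 with h' | h'
    · exact absurd h' hX
    · exact h'
  obtain ⟨H₁, rfl⟩ := eq_p_mul_of_pr_zero p hHz
  refine ⟨H₁, ?_⟩
  have := hH
  rw [show wprod p a m * (C (p:ℤ_[p]) * H₁)
      = C (p:ℤ_[p]) * (wprod p a m * H₁) by ring] at this
  exact mul_left_cancel₀ (Cp_ne_zero p) this

lemma pow_p_dvd_of_all_dvd (a : ℕ) :
    ∀ (k : ℕ) (D : PowerSeries ℤ_[p]), (∀ m, wprod p a m ∣ D) →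
      (C (p : ℤ_[p])) ^ k ∣ D := by
  intro k
  induction k with
  | zero => intro D _; simp
  | succ k ih =>
    intro D hD
    have hprz : pr p D = 0 := by
      ext n
      have : (X : PowerSeries (ZMod p)) ^ (Finset.Icc a (a + n)).card ∣ pr p D := by
        rw [← pr_wprod]; exact map_dvd (pr p) (hD (a + n))
      rw [PowerSeries.X_pow_dvd_iff] at this
      have hn : n < (Finset.Icc a (a + n)).card := by
        rw [Nat.card_Icc]; omega
      simpa using this n hn
    obtain ⟨D₁, rfl⟩ := eq_p_mul_of_pr_zero p hprz
    have hD₁ : ∀ m, wprod p a m ∣ D₁ := fun m => wprod_dvd_of_dvd_p_mul p (hD m)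
    obtain ⟨E, rfl⟩ := ih D₁ hD₁
    exact ⟨E, by ring⟩

lemma padic_zero_of_all_pow_dvd {x : ℤ_[p]} (h : ∀ k : ℕ, (p : ℤ_[p]) ^ k ∣ x) : x = 0 := by
  by_contra hx
  have hnorm : ∀ k : ℕ, ‖x‖ ≤ (p : ℝ) ^ (-(k:ℤ)) := by
    intro k
    rw [PadicInt.norm_le_pow_iff_mem_span_pow, Ideal.mem_span_singleton]
    exact h k
  have hp1 : (1:ℝ) < p := by exact_mod_cast (Fact.out : p.Prime).one_lt
  obtain ⟨k, hk⟩ := pow_unbounded_of_one_lt (‖x‖⁻¹) hp1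
  have hxpos : (0:ℝ) < ‖x‖ := norm_pos_iff.mpr hx
  have := hnorm k
  rw [zpow_neg, zpow_natCast] at this
  have h2 : ‖x‖⁻¹ < ((p:ℝ)^k) := hk
  have h3 : ((p:ℝ)^k)⁻¹ < ‖x‖ := (inv_lt_comm₀ hxpos (by positivity)).mp h2
  linarith

lemma all_dvd_zero (a : ℕ) (D : PowerSeries ℤ_[p]) (hD : ∀ m, wprod p a m ∣ D) : D = 0 := by
  ext n
  apply padic_zero_of_all_pow_dvd p
  intro k
  obtain ⟨E, rfl⟩ := pow_p_dvd_of_all_dvd p a k D hD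
  rw [← map_pow, PowerSeries.coeff_C_mul]
  exact dvd_mul_right _ _

lemma p_dvd_one_sub (k : ℕ) : (p : ℤ_[p]) ∣ (1 - (1 + p : ℤ_[p]) ^ k) := by
  have h := sub_dvd_pow_sub_pow (1 + p : ℤ_[p]) 1 k
  rw [add_sub_cancel_left, one_pow] at h
  have := dvd_neg.mpr h
  rwa [neg_sub] at this

lemma coeff_prod_dvd (s : Finset ℕ) (n : ℕ) :
    (p : ℤ_[p]) ^ (s.card - n) ∣
      PowerSeries.coeff (R := ℤ_[p]) n (∏ k ∈ s, (1 + X - C ((1 + p : ℤ_[p]) ^ k))) := by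
  induction s using Finset.induction_on generalizing n with
  | empty => simp
  | insert _ _ hk ih =>
    rename_i k s
    rw [Finset.prod_insert hk, Finset.card_insert_of_notMem hk]
    have hfac : (1 + X - C ((1 + p : ℤ_[p]) ^ k)) =
        X + C (1 - (1 + p : ℤ_[p]) ^ k) := by
      rw [map_sub, map_one]; ring
    rw [hfac, add_mul]
    rw [map_add]
    set G := ∏ j ∈ s, (1 + X - C ((1 + p : ℤ_[p]) ^ j)) with hG
    rcases n with _ | n'
    · rw [PowerSeries.coeff_zero_eq_constantCoeff, map_mul, map_mul]
      simp only [constantCoeff_X, zero_mul, zero_add, constantCoeff_C]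
      have h1 : (p:ℤ_[p]) ∣ (1 - (1+p:ℤ_[p])^k) := p_dvd_one_sub p k
      have h2 : (p:ℤ_[p])^(s.card) ∣ (constantCoeff (R := ℤ_[p])) G := by
        simpa using ih 0
      rw [Nat.sub_zero]
      calc (p:ℤ_[p])^(s.card + 1) = p * p^s.card := by ring
        _ ∣ (1 - (1+p:ℤ_[p])^k) * (constantCoeff (R := ℤ_[p])) G := mul_dvd_mul h1 h2
    · rw [PowerSeries.coeff_succ_X_mul, PowerSeries.coeff_C_mul]
      apply dvd_add
      · exact (pow_dvd_pow _ (by omega)).trans (ih n')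
      · have h1 : (p:ℤ_[p]) ∣ (1 - (1+p:ℤ_[p])^k) := p_dvd_one_sub p k
        have h2 : (p:ℤ_[p])^(s.card - (n'+1)) ∣ PowerSeries.coeff (R := ℤ_[p]) (n'+1) G := ih (n'+1)
        have hmul := mul_dvd_mul h1 h2
        rw [← pow_succ'] at hmul
        exact (pow_dvd_pow (p:ℤ_[p])
          (by omega : s.card + 1 - (n'+1) ≤ s.card - (n'+1) + 1)).trans hmul

lemma coeff_mem_span_dvd {a m n : ℕ} {F : PowerSeries ℤ_[p]}
    (hF : F ∈ Ideal.span {wprod p a m}) :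
    (p : ℤ_[p]) ^ ((Finset.Icc a m).card - n) ∣ PowerSeries.coeff (R := ℤ_[p]) n F := by
  rw [Ideal.mem_span_singleton] at hF
  obtain ⟨H, rfl⟩ := hF
  rw [PowerSeries.coeff_mul]
  apply Finset.dvd_sum
  intro q hq
  have hq1 : q.1 ≤ n := by
    rw [Finset.HasAntidiagonal.mem_antidiagonal] at hq; omega
  exact ((pow_dvd_pow _
    (by omega : (Finset.Icc a m).card - n ≤ (Finset.Icc a m).card - q.1)).trans
    (coeff_prod_dvd p _ q.1)).mul_right _

lemma wprod_dvd_le (a : ℕ) {m M : ℕ} (h : m ≤ M) : wprod p a m ∣ wprod p a M :=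
  Finset.prod_dvd_prod_of_subset _ _ _ (Finset.Icc_subset_Icc_right h)

lemma wmap_mk (a m : ℕ) (F : PowerSeries ℤ_[p]) :
    wmap p a m (Ideal.Quotient.mk (Ideal.span {wprod p a (m+1)}) F) =
      Ideal.Quotient.mk (Ideal.span {wprod p a m}) F := by
  rw [wmap, Ideal.quotientMap_mk, RingHom.id_apply]

end IwaAux

set_option maxHeartbeats 1000000 in
set_option synthInstance.maxHeartbeats 200000 in
open IwaAux in
theorem iwasawa_algebra_isom_inverse_limit (hp : Odd p) (a : ℕ) :
    letI : TopologicalSpace (PowerSeries ℤ_[p]) := lambdaTopology p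
    ∃ e : PowerSeries ℤ_[p] ≃+* iwasawaInverseLimit p a,
      Continuous ⇑e ∧ Continuous ⇑e.symm ∧
      ∀ (F : PowerSeries ℤ_[p]) (m : ℕ),
        ((e F : Π m : ℕ, PowerSeries ℤ_[p] ⧸ Ideal.span {wprod p a m}) m) =
          Ideal.Quotient.mk (Ideal.span {wprod p a m}) F := by
  letI := lambdaTopology p
  haveI hTR : IsTopologicalRing (PowerSeries ℤ_[p]) := lamRing p
  haveI := lamCompact p
  haveI := lamT2 p
  set I : ℕ → Ideal (PowerSeries ℤ_[p]) := fun m => Ideal.span {wprod p a m} with hI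
  set q : ∀ m, PowerSeries ℤ_[p] →+* PowerSeries ℤ_[p] ⧸ I m :=
    fun m => Ideal.Quotient.mk (I m) with hq
  have hcont_mk : ∀ m, Continuous (q m) := fun m => continuous_quot_mk
  -- the span ideals are closed
  have hclosed : ∀ m, IsClosed ((I m : Set (PowerSeries ℤ_[p]))) := by
    intro m
    have hrange : (I m : Set (PowerSeries ℤ_[p]))
        = Set.range (fun H => wprod p a m * H) := by
      ext x
      simp only [SetLike.mem_coe, hI, Ideal.mem_span_singleton, Set.mem_range]
      exact ⟨fun ⟨c, hc⟩ => ⟨c, hc.symm⟩, fun ⟨c, hc⟩ => ⟨c, hc.symm⟩⟩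
    rw [hrange]
    exact (isCompact_range (continuous_const.mul continuous_id)).isClosed
  -- the quotients are Hausdorff
  haveI hT2q : ∀ m, T2Space (PowerSeries ℤ_[p] ⧸ I m) := by
    intro m
    rw [IsTopologicalAddGroup.t2Space_iff_zero_closed]
    rw [← (QuotientRing.isOpenQuotientMap_mk (I m)).isQuotientMap.isClosed_preimage]
    have : (Ideal.Quotient.mk (I m)) ⁻¹' {0} = (I m : Set (PowerSeries ℤ_[p])) := by
      ext x
      simp only [Set.mem_preimage, Set.mem_singleton_iff, SetLike.mem_coe]
      exact Ideal.Quotient.eq_zero_iff_mem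
    rw [this]
    exact hclosed m
  -- the natural ring hom into the inverse limit
  have hmem : ∀ F : PowerSeries ℤ_[p], (fun m => q m F) ∈ iwasawaInverseLimit p a := by
    intro F m
    exact wmap_mk p a m F
  set Φ : PowerSeries ℤ_[p] →+* ↥(iwasawaInverseLimit p a) :=
    (Pi.ringHom q).codRestrict _ hmem with hΦ
  have hinj : Function.Injective Φ := by
    rw [injective_iff_map_eq_zero]
    intro F hF
    apply all_dvd_zero p a F
    intro m
    have h0 : q m F = 0 := by
      have := congrFun (congrArg (Subtype.val) hF) m
      exact this
    rw [← Ideal.mem_span_singleton]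
    exact Ideal.Quotient.eq_zero_iff_mem.mp h0
  have hsurj : Function.Surjective Φ := by
    rintro ⟨f, hf⟩
    have hf' : ∀ m, wmap p a m (f (m + 1)) = f m := hf
    choose F hFmk using fun m => Ideal.Quotient.mk_surjective (I := I m) (f m)
    have hstep : ∀ m, wprod p a m ∣ (F (m+1) - F m) := by
      intro m
      have h1 : wmap p a m (Ideal.Quotient.mk (I (m+1)) (F (m+1))) = f m := by
        rw [hFmk (m+1)]; exact hf' m
      rw [wmap_mk, ← hFmk m] at h1
      rw [← Ideal.mem_span_singleton]
      exact (Ideal.Quotient.eq).mp h1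
    -- coefficientwise Cauchy sequences
    have hp1R : (1:ℝ) < p := by exact_mod_cast (Fact.out : p.Prime).one_lt
    have hcau : ∀ n, CauchySeq (fun m => PowerSeries.coeff (R := ℤ_[p]) n (F m)) := by
      intro n
      apply cauchySeq_of_le_geometric ((p:ℝ)⁻¹) ((p:ℝ)^(a+n))
        (by rw [inv_lt_one_iff₀]; right; exact hp1R)
      intro j
      rw [dist_eq_norm, ← norm_neg]
      have hdvd : (p:ℤ_[p])^((Finset.Icc a j).card - n)
          ∣ PowerSeries.coeff (R := ℤ_[p]) n (F (j+1) - F j) :=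
        coeff_mem_span_dvd p (Ideal.mem_span_singleton.mpr (hstep j))
      rw [map_sub] at hdvd
      have h1 : ‖PowerSeries.coeff (R := ℤ_[p]) n (F (j+1)) - PowerSeries.coeff (R := ℤ_[p]) n (F j)‖
          ≤ (p:ℝ) ^ (-(((Finset.Icc a j).card - n : ℕ) : ℤ)) := by
        rw [PadicInt.norm_le_pow_iff_mem_span_pow, Ideal.mem_span_singleton]
        exact hdvd
      have hcard : (Finset.Icc a j).card = j + 1 - a := Nat.card_Icc a j
      have hexp : (-(((Finset.Icc a j).card - n : ℕ) : ℤ)) ≤ ((a+n : ℕ) : ℤ) - (j : ℤ) := by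
        rw [hcard]; omega
      have h2 : (p:ℝ) ^ (-(((Finset.Icc a j).card - n : ℕ) : ℤ))
          ≤ (p:ℝ) ^ (((a+n : ℕ) : ℤ) - (j : ℤ)) :=
        zpow_le_zpow_right₀ (le_of_lt hp1R) hexp
      have h3 : (p:ℝ) ^ (((a+n : ℕ) : ℤ) - (j : ℤ)) = (p:ℝ)^(a+n) * ((p:ℝ)⁻¹)^j := by
        rw [zpow_sub₀ (by positivity), zpow_natCast, zpow_natCast, div_eq_mul_inv, inv_pow]
      rw [neg_sub]
      exact h1.trans (h3 ▸ h2)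
    choose L hL using fun n => cauchySeq_tendsto_of_complete (hcau n)
    set Finf : PowerSeries ℤ_[p] := PowerSeries.mk L with hFinf
    have htend : Filter.Tendsto F Filter.atTop (nhds Finf) := by
      rw [(lamHomeo p).isInducing.tendsto_nhds_iff]
      rw [tendsto_pi_nhds]
      intro n
      have : (lamHomeo p) Finf n = L n := by
        simp [lamHomeo, toPi, hFinf, Equiv.toHomeomorphOfIsInducing]
      rw [this]
      exact hL n
    have hmemI : ∀ m, Finf - F m ∈ I m := by
      intro m
      have hev : ∀ᶠ M in Filter.atTop, F M - F m ∈ (I m : Set (PowerSeries ℤ_[p])) := by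
        rw [Filter.eventually_atTop]
        refine ⟨m, ?_⟩
        intro M hM
        induction M, hM using Nat.le_induction with
        | base => simp only [sub_self]; exact (I m).zero_mem
        | succ M hM ihM =>
          have : F (M+1) - F m = (F (M+1) - F M) + (F M - F m) := by ring
          rw [this]
          exact (I m).add_mem (Ideal.mem_span_singleton.mpr
            ((wprod_dvd_le p a hM).trans (hstep M))) ihM
      exact (hclosed m).mem_of_tendsto (htend.sub tendsto_const_nhds) hev
    refine ⟨Finf, ?_⟩
    apply Subtype.ext
    funext m
    show q m Finf = f m
    rw [← hFmk m]
    exact (Ideal.Quotient.eq).mpr (hmemI m)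
  set e : PowerSeries ℤ_[p] ≃+* ↥(iwasawaInverseLimit p a) :=
    RingEquiv.ofBijective Φ ⟨hinj, hsurj⟩ with he
  have hconte : Continuous ⇑e := by
    show Continuous fun F => (⟨fun m => q m F, hmem F⟩ : ↥(iwasawaInverseLimit p a))
    exact Continuous.subtype_mk (continuous_pi fun m => hcont_mk m) _
  refine ⟨e, hconte, ?_, fun F m => rfl⟩
  exact Continuous.continuous_symm_of_equiv_compact_to_t2 (f := e.toEquiv) hconte
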